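/- Let C be an absolutely continuous (d+1)-dimensional copula with density c, F a discrete distribution function on ℕ₀, and α ∈ (0,1]. Define 𝔠_{α,F,C}(u,v) = c(⌈u⌉_{α,F}, v) for (u,v) ∈ [0,1] × [0,1]^d. Then 𝔠_{α,F,C} is nonnegative, measurable, and integrates to 1 over [0,1]^{d+1}, i.e., it is a probability density with respect to (d+1)-dimensional Lebesgue measure on the unit cube. -/

import Mathlib

open MeasureTheory Set Filter

/-- `F(n-1)` with the convention `F(-1) = 0`. -/
noncomputable def Fm (F : ℕ → ℝ) : ℕ → ℝ := fun n => if n = 0 then 0 else F (n - 1)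

/-- `F_α(n) = (1-α) F(n-1) + α F(n)`. -/
noncomputable def Falpha (α : ℝ) (F : ℕ → ℝ) (n : ℕ) : ℝ :=
  (1 - α) * Fm F n + α * F n

/-- `⌈u⌉_{α,F} = Σ_{n ≥ 0} F_α(n) · 1_{(F(n-1), F(n)]}(u)`, with `⌈0⌉ = 0` automatic. -/
noncomputable def ceilT (α : ℝ) (F : ℕ → ℝ) (u : ℝ) : ℝ :=
  ∑' n : ℕ, Falpha α F n * Set.indicator (Set.Ioc (Fm F n) (F n)) (fun _ => (1 : ℝ)) u

lemma Fm_nonneg {F : ℕ → ℝ} (hF0 : ∀ n, 0 ≤ F n) (n : ℕ) : 0 ≤ Fm F n := by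
  unfold Fm; split
  · exact le_refl _
  · exact hF0 _

lemma Fm_le {F : ℕ → ℝ} (hmono : Monotone F) (hF0 : ∀ n, 0 ≤ F n) (n : ℕ) :
    Fm F n ≤ F n := by
  unfold Fm; split
  · exact hF0 n
  · exact hmono (Nat.sub_le n 1)

lemma not_mem_of_ne {F : ℕ → ℝ} (hmono : Monotone F) {u : ℝ} {m n : ℕ} (hne : m ≠ n)
    (hn : u ∈ Set.Ioc (Fm F n) (F n)) : u ∉ Set.Ioc (Fm F m) (F m) := by
  intro hm
  rcases lt_or_gt_of_ne hne with h | h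
  · have h1 : F m ≤ Fm F n := by
      unfold Fm
      rw [if_neg (Nat.ne_zero_of_lt h)]
      exact hmono (Nat.le_pred_of_lt h)
    exact absurd hn.1 (not_lt.2 (hm.2.trans h1))
  · have h1 : F n ≤ Fm F m := by
      unfold Fm
      rw [if_neg (Nat.ne_zero_of_lt h)]
      exact hmono (Nat.le_pred_of_lt h)
    exact absurd hm.1 (not_lt.2 (hn.2.trans h1))

lemma ceil_mem {F : ℕ → ℝ} (hmono : Monotone F) (hF0 : ∀ n, 0 ≤ F n)
    (hF1 : ∀ n, F n ≤ 1) {α : ℝ} (hα : α ∈ Set.Ioc (0 : ℝ) 1) (u : ℝ) :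
    ceilT α F u ∈ Set.Icc (0 : ℝ) 1 := by
  unfold ceilT
  by_cases hex : ∃ n, u ∈ Set.Ioc (Fm F n) (F n)
  · obtain ⟨n, hn⟩ := hex
    rw [tsum_eq_single n (fun m hm => by
      rw [Set.indicator_of_notMem (not_mem_of_ne hmono hm hn), mul_zero])]
    rw [Set.indicator_of_mem hn, mul_one]
    unfold Falpha
    have h1 := Fm_nonneg hF0 n
    have h2 := Fm_le hmono hF0 n
    have h3 := hF0 n
    have h4 := hF1 n
    have h5 : Fm F n ≤ 1 := h2.trans h4
    obtain ⟨ha1, ha2⟩ := hα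
    constructor <;> nlinarith
  · push_neg at hex
    have hz : ∀ n : ℕ, Falpha α F n *
        Set.indicator (Set.Ioc (Fm F n) (F n)) (fun _ => (1 : ℝ)) u = 0 := fun n => by
      rw [Set.indicator_of_notMem (hex n), mul_zero]
    rw [tsum_congr hz, tsum_zero]
    exact ⟨le_refl _, zero_le_one⟩

lemma summable_ceil {F : ℕ → ℝ} (hmono : Monotone F) (α : ℝ) (u : ℝ) :
    Summable (fun n : ℕ =>
      Falpha α F n * Set.indicator (Set.Ioc (Fm F n) (F n)) (fun _ => (1 : ℝ)) u) := by
  by_cases hex : ∃ n, u ∈ Set.Ioc (Fm F n) (F n)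
  · obtain ⟨n, hn⟩ := hex
    apply summable_of_ne_finset_zero (s := {n})
    intro m hm
    rw [Set.indicator_of_notMem
      (not_mem_of_ne hmono (Finset.notMem_singleton.1 hm) hn), mul_zero]
  · push_neg at hex
    apply summable_of_ne_finset_zero (s := ∅)
    intro m _
    rw [Set.indicator_of_notMem (hex m), mul_zero]

lemma ceil_meas {F : ℕ → ℝ} (hmono : Monotone F) (α : ℝ) :
    Measurable (ceilT α F) := by
  have hpart : ∀ N : ℕ, Measurable (fun u : ℝ => ∑ n ∈ Finset.range N,
      Falpha α F n * Set.indicator (Set.Ioc (Fm F n) (F n)) (fun _ => (1 : ℝ)) u) :=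
    fun N => Finset.measurable_sum _ fun n _ =>
      ((measurable_const.indicator measurableSet_Ioc)).const_mul _
  apply measurable_of_tendsto_metrizable hpart
  rw [tendsto_pi_nhds]
  intro u
  exact (summable_ceil hmono α u).hasSum.tendsto_sum_nat

theorem stmt2 (d : ℕ) (F : ℕ → ℝ) (hmono : Monotone F) (hF0 : ∀ n, 0 ≤ F n)
    (hF1 : ∀ n, F n ≤ 1) (hlim : Tendsto F atTop (nhds 1))
    (α : ℝ) (hα : α ∈ Set.Ioc (0 : ℝ) 1)
    (c : ℝ → (Fin d → ℝ) → ℝ)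
    (hc_meas : Measurable (Function.uncurry c))
    (hc_nonneg : ∀ u v, 0 ≤ c u v)
    (hc_sec : ∀ u ∈ Set.Icc (0 : ℝ) 1, ∫ v in Set.Icc (0 : Fin d → ℝ) 1, c u v = 1) :
    (∀ (u : ℝ) (v : Fin d → ℝ), 0 ≤ c (ceilT α F u) v) ∧
    Measurable (fun p : ℝ × (Fin d → ℝ) => c (ceilT α F p.1) p.2) ∧
    ∫ p in (Set.Icc (0 : ℝ) 1) ×ˢ (Set.Icc (0 : Fin d → ℝ) 1),
        c (ceilT α F p.1) p.2 = 1 := by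
  have hg : Measurable (fun p : ℝ × (Fin d → ℝ) => c (ceilT α F p.1) p.2) :=
    hc_meas.comp (((ceil_meas hmono α).comp measurable_fst).prodMk measurable_snd)
  refine ⟨fun u v => hc_nonneg _ _, hg, ?_⟩
  set S : Set ℝ := Set.Icc 0 1
  set T : Set (Fin d → ℝ) := Set.Icc 0 1
  -- sections are integrable
  have hint : ∀ t ∈ S, IntegrableOn (fun v => c t v) T := by
    intro t ht
    by_contra h
    have := hc_sec t ht
    rw [integral_undef h] at this
    norm_num at this
  -- lintegral of each section is 1
  have hlint : ∀ t ∈ S, ∫⁻ v in T, ENNReal.ofReal (c t v) = 1 := by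
    intro t ht
    rw [← ofReal_integral_eq_lintegral_ofReal (hint t ht)
      (Filter.Eventually.of_forall (hc_nonneg t)), hc_sec t ht, ENNReal.ofReal_one]
  -- lintegral over the cube is 1
  have key : ∫⁻ p in S ×ˢ T, ENNReal.ofReal (c (ceilT α F p.1) p.2) = 1 := by
    rw [Measure.volume_eq_prod, ← Measure.prod_restrict,
      lintegral_prod _ hg.ennreal_ofReal.aemeasurable]
    have h1 : ∀ u : ℝ, ∫⁻ v in T, ENNReal.ofReal (c (ceilT α F u) v) = 1 :=
      fun u => hlint _ (ceil_mem hmono hF0 hF1 hα u)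
    rw [lintegral_congr h1, lintegral_one, Measure.restrict_apply_univ]
    simp [S, Real.volume_Icc]
  rw [integral_eq_lintegral_of_nonneg_ae
    (Filter.Eventually.of_forall (fun p => hc_nonneg _ _)) hg.aestronglyMeasurable, key]
  simp
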